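/- For n ≥ 1, the dihedral group D_n of order 2n is isomorphic to its own automorphism group if and only if φ(n) = 2 (equivalently n ∈ {3, 4, 6}). -/

import Mathlib

namespace DihedralGroup

variable {n : ℕ}

private lemma r_pow' (i : ZMod n) (k : ℕ) : (r i : DihedralGroup n) ^ k = r ((k : ZMod n) * i) := by
  induction k with
  | zero => simp
  | succ k ih => rw [pow_succ, ih, r_mul_r]; congr 1; push_cast; ring

/-- The automorphism of the dihedral group determined by a unit `b` and translation `a`. -/
def dAut (a : ZMod n) (b : (ZMod n)ˣ) : MulAut (DihedralGroup n) where
  toFun x := match x with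
    | r j => r ((b : ZMod n) * j)
    | sr j => sr ((b : ZMod n) * j + a)
  invFun x := match x with
    | r j => r ((b⁻¹ : (ZMod n)ˣ) * j)
    | sr j => sr ((b⁻¹ : (ZMod n)ˣ) * (j - a))
  left_inv x := by
    rcases x with j | j <;> simp [← mul_assoc, ← Units.val_mul]
  right_inv x := by
    rcases x with j | j <;> simp [← mul_assoc, ← Units.val_mul, mul_sub]
  map_mul' x y := by
    rcases x with i | i <;> rcases y with j | j <;>
      simp only [r_mul_r, r_mul_sr, sr_mul_r, sr_mul_sr] <;> ring_nf

@[simp] lemma dAut_apply_r (a : ZMod n) (b : (ZMod n)ˣ) (j : ZMod n) :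
    dAut a b (r j) = r ((b : ZMod n) * j) := rfl

@[simp] lemma dAut_apply_sr (a : ZMod n) (b : (ZMod n)ˣ) (j : ZMod n) :
    dAut a b (sr j) = sr ((b : ZMod n) * j + a) := rfl

lemma dAut_mul (a c : ZMod n) (b d : (ZMod n)ˣ) :
    dAut a b * dAut c d = dAut ((b : ZMod n) * c + a) (b * d) := by
  ext x
  rcases x with j | j <;>
    simp [MulAut.mul_apply, mul_add, add_assoc, mul_assoc]

lemma dAut_injective2 {a a' : ZMod n} {b b' : (ZMod n)ˣ} (h : dAut a b = dAut a' b') :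
    a = a' ∧ b = b' := by
  have h1 := congrArg (fun f : MulAut (DihedralGroup n) => f (sr 0)) h
  have h2 := congrArg (fun f : MulAut (DihedralGroup n) => f (r 1)) h
  simp only [dAut_apply_sr, dAut_apply_r, mul_zero, zero_add, mul_one, r.injEq, sr.injEq] at h1 h2
  exact ⟨h1, Units.ext h2⟩

lemma one_ne_neg_one (hn : 2 < n) : (1 : ZMod n) ≠ -1 := by
  intro h
  have h2 : (2 : ZMod n) = 0 := by
    have := eq_neg_iff_add_eq_zero.mp h
    linear_combination this
  have hd : (n : ℕ) ∣ 2 := (ZMod.natCast_eq_zero_iff 2 n).mp (by exact_mod_cast h2)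
  have := Nat.le_of_dvd (by norm_num) hd
  omega

lemma exists_dAut_eq (hn : 2 < n) (e : MulAut (DihedralGroup n)) :
    ∃ a b, e = dAut a b := by
  have : NeZero n := ⟨by omega⟩
  -- e (r 1) = r b with b a unit
  have hord : orderOf (e (r 1)) = n := by
    rw [MulEquiv.orderOf_eq e (r 1), orderOf_r_one]
  obtain ⟨b, hb⟩ : ∃ b : ZMod n, e (r 1) = r b := by
    rcases h : e (r 1) with j | j
    · exact ⟨j, rfl⟩
    · exfalso; rw [h, orderOf_sr] at hord; omega
  have hbu : IsUnit b := by
    rw [hb, orderOf_r] at hord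
    have hg : Nat.gcd n b.val = 1 := by
      rcases Nat.div_eq_self.mp hord with h' | h'
      · omega
      · exact h'
    have : IsUnit ((b.val : ℕ) : ZMod n) := by
      rw [ZMod.isUnit_iff_coprime]
      exact Nat.coprime_comm.mp hg
    simpa [ZMod.natCast_val, ZMod.cast_id] using this
  obtain ⟨a, ha⟩ : ∃ a : ZMod n, e (sr 0) = sr a := by
    rcases h : e (sr 0) with j | j
    · exfalso
      have hcomm : e (sr 0) * e (r 1) = e (r 1) * e (sr 0) := by
        rw [h, hb, r_mul_r, r_mul_r, add_comm]
      rw [← map_mul, ← map_mul] at hcomm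
      have := e.injective hcomm
      simp only [sr_mul_r, r_mul_sr] at this
      have h11 : (0 : ZMod n) + 1 = 0 - 1 := by injection this
      exact one_ne_neg_one hn (by linear_combination h11)
    · exact ⟨j, rfl⟩
  lift b to (ZMod n)ˣ using hbu with bu hbu'
  refine ⟨a, bu, ?_⟩
  have hrj : ∀ j : ZMod n, e (r j) = r ((bu : ZMod n) * j) := by
    intro j
    have hj : (r j : DihedralGroup n) = (r 1) ^ j.val := by
      rw [r_one_pow]; simp [ZMod.natCast_val, ZMod.cast_id]
    rw [hj, map_pow, hb, r_pow']
    congr 1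
    simp [ZMod.natCast_val, ZMod.cast_id, mul_comm]
  ext x
  rcases x with j | j
  · rw [hrj, dAut_apply_r]
  · have hsj : (sr j : DihedralGroup n) = sr 0 * r j := by rw [sr_mul_r, zero_add]
    rw [hsj, map_mul, map_mul, ha, hrj, dAut_apply_sr, dAut_apply_r]
    simp only [sr_mul_r]
    congr 1
    ring

lemma dAut_card (hn : 2 < n) :
    Nat.card (MulAut (DihedralGroup n)) = n * n.totient := by
  have : NeZero n := ⟨by omega⟩
  have hbij : Function.Bijective
      (fun p : ZMod n × (ZMod n)ˣ => dAut p.1 p.2) := by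
    constructor
    · rintro ⟨a, b⟩ ⟨a', b'⟩ h
      obtain ⟨h1, h2⟩ := dAut_injective2 h
      exact Prod.ext h1 h2
    · intro e
      obtain ⟨a, b, rfl⟩ := exists_dAut_eq hn e
      exact ⟨(a, b), rfl⟩
  rw [← Nat.card_congr (Equiv.ofBijective _ hbij), Nat.card_prod, Nat.card_zmod,
    Nat.card_eq_fintype_card, ZMod.card_units_eq_totient]

lemma dAut_zero_one : (dAut 0 1 : MulAut (DihedralGroup n)) = 1 := by
  ext x
  rcases x with j | j <;> simp

lemma units_eq_one_or (hn : 2 < n) (htot : n.totient = 2) (b : (ZMod n)ˣ) :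
    b = 1 ∨ b = -1 := by
  have : NeZero n := ⟨by omega⟩
  have h1 : (1 : (ZMod n)ˣ) ≠ -1 := by
    intro h
    exact one_ne_neg_one hn (by simpa using congrArg Units.val h)
  have hcard : Fintype.card (ZMod n)ˣ = 2 := by
    rw [ZMod.card_units_eq_totient]; exact htot
  have huniv : (Finset.univ : Finset (ZMod n)ˣ) = {1, -1} := by
    refine (Finset.eq_of_subset_of_card_le (Finset.subset_univ _) ?_).symm
    rw [Finset.card_univ, hcard, Finset.card_insert_of_notMem (by simpa using h1),
      Finset.card_singleton]
  have hb : b ∈ (Finset.univ : Finset (ZMod n)ˣ) := Finset.mem_univ b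
  rw [huniv, Finset.mem_insert, Finset.mem_singleton] at hb
  exact hb

/-- The homomorphism from the dihedral group to its automorphism group. -/
def dihedralToAut (n : ℕ) : DihedralGroup n →* MulAut (DihedralGroup n) :=
  MonoidHom.mk' (fun x => match x with
    | r i => dAut i 1
    | sr i => dAut (-i) (-1)) (by
      rintro (i | i) (j | j) <;>
        simp only [r_mul_r, r_mul_sr, sr_mul_r, sr_mul_sr, dAut_mul] <;>
        · congr 1 <;> simp <;> ring)

@[simp] lemma dihedralToAut_r (i : ZMod n) : dihedralToAut n (r i) = dAut i 1 := rfl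

@[simp] lemma dihedralToAut_sr (i : ZMod n) : dihedralToAut n (sr i) = dAut (-i) (-1) := rfl

lemma dihedralToAut_bijective (hn : 2 < n) (htot : n.totient = 2) :
    Function.Bijective (dihedralToAut n) := by
  have h1 : (1 : (ZMod n)ˣ) ≠ -1 := by
    intro h
    exact one_ne_neg_one hn (by simpa using congrArg Units.val h)
  constructor
  · rintro (i | i) (j | j) h <;>
      simp only [dihedralToAut_r, dihedralToAut_sr] at h <;>
      obtain ⟨ha, hb⟩ := dAut_injective2 h
    · rw [ha]
    · exact absurd hb h1
    · exact absurd hb.symm h1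
    · rw [neg_injective ha]
  · intro e
    obtain ⟨a, b, rfl⟩ := exists_dAut_eq hn e
    rcases units_eq_one_or hn htot b with rfl | rfl
    · exact ⟨r a, rfl⟩
    · exact ⟨sr (-a), by simp⟩

lemma aut_d1_apply (f : MulAut (DihedralGroup 1)) (x : DihedralGroup 1) : f x = x := by
  rcases x with i | i <;> rw [Subsingleton.elim i 0]
  · rw [← one_def, map_one]
  · rcases h : f (sr 0) with j | j
    · exfalso
      rw [Subsingleton.elim j 0] at h
      have : (sr 0 : DihedralGroup 1) = 1 := f.injective (by rw [h, map_one, one_def])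
      exact (by decide : (sr 0 : DihedralGroup 1) ≠ 1) this
    · rw [Subsingleton.elim j 0]

/-- The extra automorphism of the Klein four group `DihedralGroup 2`. -/
def klein_swap : MulAut (DihedralGroup 2) where
  toFun x := match x with
    | r i => if i = 0 then r 0 else sr 0
    | sr i => if i = 0 then r 1 else sr 1
  invFun x := match x with
    | r i => if i = 0 then r 0 else sr 0
    | sr i => if i = 0 then r 1 else sr 1
  left_inv := by decide
  right_inv := by decide
  map_mul' := by decide

lemma not_comm_aut_d2 :
    ¬ ∀ u v : MulAut (DihedralGroup 2), u * v = v * u := by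
  intro h
  have := congrArg (fun f : MulAut (DihedralGroup 2) => f (r 1))
    (h (dAut (1 : ZMod 2) 1) klein_swap)
  simp only [MulAut.mul_apply] at this
  have h2 : klein_swap (r 1) = sr 0 := by decide
  have h3 : dAut (1 : ZMod 2) 1 (r 1) = r 1 := by decide
  rw [h2, h3, h2] at this
  have h4 : dAut (1 : ZMod 2) 1 (sr 0) = sr 1 := by decide
  rw [h4] at this
  exact (by decide : (sr 1 : DihedralGroup 2) ≠ sr 0) this

end DihedralGroup

open DihedralGroup in
theorem dihedral_iso_aut_iff_totient_eq_two (n : ℕ) (hn : 1 ≤ n) :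
    Nonempty (DihedralGroup n ≃* MulAut (DihedralGroup n)) ↔ Nat.totient n = 2 := by
  constructor
  · rintro ⟨e⟩
    rcases lt_or_ge 2 n with h3 | h3
    · have : NeZero n := ⟨by omega⟩
      have hcard := Nat.card_congr e.toEquiv
      rw [DihedralGroup.nat_card, dAut_card h3] at hcard
      have : n * 2 = n * n.totient := by omega
      exact (Nat.eq_of_mul_eq_mul_left (by omega) this).symm
    · interval_cases n
      · exfalso
        have h01 : (r 0 : DihedralGroup 1) = sr 0 := by
          apply e.injective
          ext x
          rw [aut_d1_apply, aut_d1_apply]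
        exact (by decide : (r 0 : DihedralGroup 1) ≠ sr 0) h01
      · exfalso
        apply not_comm_aut_d2
        intro u v
        obtain ⟨x, rfl⟩ := e.surjective u
        obtain ⟨y, rfl⟩ := e.surjective v
        rw [← map_mul, ← map_mul]
        congr 1
        revert x y
        decide
  · intro htot
    have h3 : 2 < n := by
      by_contra h
      push_neg at h
      interval_cases n <;> revert htot <;> decide
    exact ⟨MulEquiv.ofBijective _ (dihedralToAut_bijective h3 htot)⟩
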